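/- Let k ≥ 1 be an integer, let X be a finite set, and let 𝓗 be a nonempty finite family of functions from X to a set Y of size 2k². Suppose that 𝓗 is 0.1-almost pairwise independent in the following counting sense: for every x₁ ≠ x₂ in X and every y₁, y₂ ∈ Y, the number of functions h ∈ 𝓗 with h(x₁) = y₁ and h(x₂) = y₂ is at most (1.1/(4k⁴))·|𝓗|. Then for every subset S ⊆ X with |S| ≤ k, there exists a function h ∈ 𝓗 that is injective on S. -/
import Mathlib


/-- Let `k ≥ 1`, `X` a finite set, and `𝓗` a nonempty finite family of
functions from `X` to a set `Y` of size `2k²` that is `0.1`-almost pairwise independent in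
the counting sense: for all `x₁ ≠ x₂` and all `y₁, y₂`, the number of `h ∈ 𝓗` with
`h x₁ = y₁` and `h x₂ = y₂` is at most `(1.1/(4k⁴))·|𝓗|`. Then for every `S ⊆ X` with
`|S| ≤ k` there is some `h ∈ 𝓗` injective on `S`. -/
theorem stmt_7 {X Y : Type} [Fintype X] [Fintype Y] [DecidableEq X] [DecidableEq Y]
    (k : ℕ) (hk : 1 ≤ k) (hY : Fintype.card Y = 2 * k ^ 2)
    (𝓗 : Finset (X → Y)) (hne : 𝓗.Nonempty)
    (hapi : ∀ x₁ x₂ : X, x₁ ≠ x₂ → ∀ y₁ y₂ : Y,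
      ((𝓗.filter fun h => h x₁ = y₁ ∧ h x₂ = y₂).card : ℝ) ≤
        (1.1 / (4 * (k : ℝ) ^ 4)) * 𝓗.card) :
    ∀ S : Finset X, S.card ≤ k → ∃ h ∈ 𝓗, Set.InjOn h ↑S := by
  intro S hS
  by_contra hcon
  push_neg at hcon
  have hsub : 𝓗 ⊆ S.offDiag.biUnion (fun p => 𝓗.filter fun h => h p.1 = h p.2) := by
    intro h hh
    have hni := hcon h hh
    rw [Set.InjOn] at hni
    push_neg at hni
    obtain ⟨x₁, hx₁, x₂, hx₂, heq, hne'⟩ := hni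
    refine Finset.mem_biUnion.mpr ⟨(x₁, x₂), Finset.mem_offDiag.mpr ⟨hx₁, hx₂, hne'⟩,
      Finset.mem_filter.mpr ⟨hh, heq⟩⟩
  -- per-pair bound
  have hpair : ∀ p ∈ S.offDiag,
      ((𝓗.filter fun h => h p.1 = h p.2).card : ℝ) ≤
        (2 * (k : ℝ) ^ 2) * ((1.1 / (4 * (k : ℝ) ^ 4)) * 𝓗.card) := by
    intro p hp
    obtain ⟨hp1, hp2, hpne⟩ := Finset.mem_offDiag.mp hp
    have hsub2 : (𝓗.filter fun h => h p.1 = h p.2) ⊆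
        Finset.univ.biUnion (fun y : Y => 𝓗.filter fun h => h p.1 = y ∧ h p.2 = y) := by
      intro h hh
      obtain ⟨hh1, hh2⟩ := Finset.mem_filter.mp hh
      exact Finset.mem_biUnion.mpr ⟨h p.1, Finset.mem_univ _,
        Finset.mem_filter.mpr ⟨hh1, rfl, hh2.symm⟩⟩
    calc ((𝓗.filter fun h => h p.1 = h p.2).card : ℝ)
        ≤ ((Finset.univ.biUnion (fun y : Y =>
            𝓗.filter fun h => h p.1 = y ∧ h p.2 = y)).card : ℝ) := by
          exact_mod_cast Finset.card_le_card hsub2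
      _ ≤ ∑ y : Y, ((𝓗.filter fun h => h p.1 = y ∧ h p.2 = y).card : ℝ) := by
          exact_mod_cast Finset.card_biUnion_le
      _ ≤ ∑ _y : Y, (1.1 / (4 * (k : ℝ) ^ 4)) * 𝓗.card := by
          exact Finset.sum_le_sum fun y _ => hapi p.1 p.2 hpne y y
      _ = (2 * (k : ℝ) ^ 2) * ((1.1 / (4 * (k : ℝ) ^ 4)) * 𝓗.card) := by
          rw [Finset.sum_const, Finset.card_univ, hY]; push_cast; ring
  have hcard : ((S.offDiag).card : ℝ) ≤ (k : ℝ) ^ 2 := by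
    rw [Finset.offDiag_card]
    have h1 : (S.card * S.card - S.card : ℕ) ≤ k * k :=
      le_trans (Nat.sub_le _ _) (Nat.mul_le_mul hS hS)
    calc ((S.card * S.card - S.card : ℕ) : ℝ) ≤ ((k * k : ℕ) : ℝ) := by exact_mod_cast h1
      _ = (k : ℝ) ^ 2 := by push_cast; ring
  have hmain : (𝓗.card : ℝ) ≤
      (k : ℝ) ^ 2 * ((2 * (k : ℝ) ^ 2) * ((1.1 / (4 * (k : ℝ) ^ 4)) * 𝓗.card)) := by
    calc (𝓗.card : ℝ)
        ≤ ((S.offDiag.biUnion (fun p => 𝓗.filter fun h => h p.1 = h p.2)).card : ℝ) := by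
          exact_mod_cast Finset.card_le_card hsub
      _ ≤ ∑ p ∈ S.offDiag, ((𝓗.filter fun h => h p.1 = h p.2).card : ℝ) := by
          exact_mod_cast Finset.card_biUnion_le
      _ ≤ ∑ _p ∈ S.offDiag, (2 * (k : ℝ) ^ 2) * ((1.1 / (4 * (k : ℝ) ^ 4)) * 𝓗.card) :=
          Finset.sum_le_sum hpair
      _ = (S.offDiag.card : ℝ) * ((2 * (k : ℝ) ^ 2) * ((1.1 / (4 * (k : ℝ) ^ 4)) * 𝓗.card)) := by
          rw [Finset.sum_const]; push_cast; ring
      _ ≤ (k : ℝ) ^ 2 * ((2 * (k : ℝ) ^ 2) * ((1.1 / (4 * (k : ℝ) ^ 4)) * 𝓗.card)) := by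
          apply mul_le_mul_of_nonneg_right hcard
          positivity
  have hk0 : (0 : ℝ) < (k : ℝ) := by exact_mod_cast hk
  have hH0 : (0 : ℝ) < (𝓗.card : ℝ) := by exact_mod_cast Finset.card_pos.mpr hne
  have : (k : ℝ) ^ 2 * ((2 * (k : ℝ) ^ 2) * ((1.1 / (4 * (k : ℝ) ^ 4)) * 𝓗.card))
      = 0.55 * 𝓗.card := by
    field_simp
    ring
  rw [this] at hmain
  nlinarith
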